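/- Let x, y ∈ ℚₚⁿ with ‖x‖ₚ = ‖y‖ₚ = p^{-L} ≥ p^l for some integers L, l, and let 0 ≤ λ < α − n. Write x = p^L u, y = p^L v with ‖u‖ₚ = ‖v‖ₚ = 1. Then ∫_{‖y‖ₚ = ‖x‖ₚ} (1 + ‖x − y‖ₚ^{λ}) ‖y‖ₚ^{-α} dⁿy ≤ A(‖x‖ₚ^{-(α−n)} + ‖x‖ₚ^{-(α−n−λ)}) ≤ A'(p, l, α, n, λ) for positive constants A, A' independent of x. -/

import Mathlib

open MeasureTheory

lemma digit {p : ℕ} [hp : Fact p.Prime] (k : ℕ) (a : ℚ_[p]) (ha : ‖a‖ ≤ (p:ℝ)^(k+1)) :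
    ∃ c : Fin p, ‖a - (p:ℚ_[p])^(-(k+1:ℤ)) * (c : ℕ)‖ ≤ (p:ℝ)^(k:ℤ) := by
  have hp1 : (1:ℝ) < p := Nat.one_lt_cast.mpr hp.out.one_lt
  have hp0 : (0:ℝ) < p := by positivity
  have hpne : (p:ℚ_[p]) ≠ 0 := Nat.cast_ne_zero.mpr hp.out.ne_zero
  set b : ℚ_[p] := (p:ℚ_[p])^((k+1:ℤ)) * a with hb
  have hcast : ((p:ℝ)^(k+1) : ℝ) = (p:ℝ)^((k+1:ℤ)) := by
    rw [← zpow_natCast]; norm_num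
  have hppow : ‖(p:ℚ_[p])^(-(k+1:ℤ))‖ = (p:ℝ)^((k+1:ℤ)) := by
    rw [norm_zpow, Padic.norm_p, inv_zpow, ← zpow_neg, neg_neg]
  have hnb : ‖b‖ ≤ 1 := by
    rw [hb, norm_mul, norm_zpow, Padic.norm_p]
    calc ((p:ℝ)⁻¹)^((k+1:ℤ)) * ‖a‖ ≤ ((p:ℝ)⁻¹)^((k+1:ℤ)) * (p:ℝ)^((k+1:ℤ)) := by
          rw [← hcast]; gcongr
      _ = 1 := by
          rw [inv_zpow, ← zpow_neg, ← zpow_add₀ (ne_of_gt hp0),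
            show (-(k+1:ℤ) + (k+1:ℤ)) = 0 by ring, zpow_zero]
  set B : ℤ_[p] := ⟨b, hnb⟩ with hB
  have happr := PadicInt.appr_spec 1 B
  have hlt : B.appr 1 < p := by simpa using PadicInt.appr_lt B 1
  rw [Ideal.mem_span_singleton] at happr
  obtain ⟨d, hd⟩ := happr
  have hnorm : ‖b - (B.appr 1 : ℚ_[p])‖ ≤ (p:ℝ)⁻¹ := by
    have heq : ((B - (B.appr 1) : ℤ_[p]) : ℚ_[p]) = b - (B.appr 1 : ℚ_[p]) := by
      rfl
    rw [← heq]
    calc ‖((B - (B.appr 1) : ℤ_[p]) : ℚ_[p])‖ = ‖(B - (B.appr 1) : ℤ_[p])‖ := rfl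
      _ ≤ ‖((p:ℕ)^1 : ℤ_[p])‖ * ‖d‖ := by rw [hd]; exact norm_mul_le _ _
      _ ≤ (p:ℝ)⁻¹ * 1 := by
          gcongr
          · simp [PadicInt.norm_p]
          · exact d.norm_le_one
      _ = (p:ℝ)⁻¹ := mul_one _
  refine ⟨⟨B.appr 1, hlt⟩, ?_⟩
  have key : a - (p:ℚ_[p])^(-(k+1:ℤ)) * (B.appr 1 : ℚ_[p]) =
      (p:ℚ_[p])^(-(k+1:ℤ)) * (b - (B.appr 1 : ℚ_[p])) := by
    rw [hb, mul_sub, ← mul_assoc, ← zpow_add₀ hpne,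
      show (-(k+1:ℤ) + (k+1:ℤ)) = 0 by ring, zpow_zero, one_mul]
  calc ‖a - (p:ℚ_[p])^(-(k+1:ℤ)) * ((⟨B.appr 1, hlt⟩ : Fin p) : ℕ)‖
      = (p:ℝ)^((k+1:ℤ)) * ‖b - (B.appr 1 : ℚ_[p])‖ := by
        rw [show (((⟨B.appr 1, hlt⟩ : Fin p) : ℕ)) = B.appr 1 from rfl, key, norm_mul, hppow]
    _ ≤ (p:ℝ)^((k+1:ℤ)) * (p:ℝ)⁻¹ := by gcongr
    _ = (p:ℝ)^(k:ℤ) := by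
        rw [← zpow_neg_one, ← zpow_add₀ (ne_of_gt hp0),
          show ((k+1:ℤ) + -1) = (k:ℤ) by ring]

open Metric in
lemma ballMeas {p : ℕ} [hp : Fact p.Prime] {n : ℕ}
    [MeasurableSpace (Fin n → ℚ_[p])] [BorelSpace (Fin n → ℚ_[p])]
    (μ : Measure (Fin n → ℚ_[p])) [μ.IsAddHaarMeasure]
    (hμ : μ (closedBall 0 1) = 1) :
    ∀ k : ℕ, μ (closedBall (0 : Fin n → ℚ_[p]) ((p:ℝ)^(k:ℤ))) ≤ ((p:ENNReal)^n)^k := by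
  intro k
  induction k with
  | zero => simpa using hμ.le
  | succ k ih =>
    have hp0 : (0:ℝ) < p := by exact_mod_cast hp.out.pos
    have hcast : ((p:ℝ)^(k+1) : ℝ) = (p:ℝ)^((k+1:ℤ)) := by
      rw [← zpow_natCast]; norm_num
    set v : (Fin n → Fin p) → (Fin n → ℚ_[p]) :=
      fun c i => (p:ℚ_[p])^(-(k+1:ℤ)) * ((c i : ℕ) : ℚ_[p]) with hv
    have hsub : closedBall (0 : Fin n → ℚ_[p]) ((p:ℝ)^((k+1:ℕ):ℤ)) ⊆
        ⋃ c : Fin n → Fin p, closedBall (v c) ((p:ℝ)^(k:ℤ)) := by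
      intro y hy
      rw [mem_closedBall, dist_zero_right] at hy
      have hyi : ∀ i, ‖y i‖ ≤ (p:ℝ)^(k+1) := by
        intro i
        refine le_trans (norm_le_pi_norm y i) ?_
        rw [hcast]; exact_mod_cast hy
      choose c hc using fun i => digit k (y i) (hyi i)
      refine Set.mem_iUnion.mpr ⟨c, ?_⟩
      rw [mem_closedBall, dist_eq_norm]
      rw [pi_norm_le_iff_of_nonneg (by positivity)]
      intro i
      simpa [hv] using hc i
    calc μ (closedBall (0 : Fin n → ℚ_[p]) ((p:ℝ)^((k+1:ℕ):ℤ)))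
        ≤ μ (⋃ c : Fin n → Fin p, closedBall (v c) ((p:ℝ)^(k:ℤ))) := measure_mono hsub
      _ ≤ ∑' c : Fin n → Fin p, μ (closedBall (v c) ((p:ℝ)^(k:ℤ))) := measure_iUnion_le _
      _ = ∑' _c : Fin n → Fin p, μ (closedBall (0 : Fin n → ℚ_[p]) ((p:ℝ)^(k:ℤ))) := by
          congr 1; funext c; exact Measure.addHaar_closedBall_center μ _ _
      _ = (Fintype.card (Fin n → Fin p) : ENNReal) *
            μ (closedBall (0 : Fin n → ℚ_[p]) ((p:ℝ)^(k:ℤ))) := by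
          rw [tsum_fintype]; simp [Finset.card_univ]
      _ ≤ ((p:ENNReal)^n) * ((p:ENNReal)^n)^k := by
          have hcard : (Fintype.card (Fin n → Fin p) : ENNReal) = (p:ENNReal)^n := by
            simp [Fintype.card_fun]
          rw [hcard]
          exact mul_le_mul_right ih _
      _ = ((p:ENNReal)^n)^(k+1) := by ring

/-- estimate of the integral over the sphere `{‖y‖ = ‖x‖}`. -/
theorem stmt7 {p : ℕ} [Fact p.Prime] {n : ℕ}
    [MeasurableSpace (Fin n → ℚ_[p])] [BorelSpace (Fin n → ℚ_[p])]
    (μ : Measure (Fin n → ℚ_[p])) [μ.IsAddHaarMeasure]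
    (hμ : μ (Metric.closedBall 0 1) = 1)
    (α lam : ℝ) (hlam0 : 0 ≤ lam) (hlam : lam < α - n) (l : ℤ) :
    ∃ A > (0 : ℝ), ∃ A' > (0 : ℝ), ∀ (L : ℤ) (x : Fin n → ℚ_[p]),
      ‖x‖ = (p : ℝ) ^ (-L) → (p : ℝ) ^ l ≤ ‖x‖ →
      (∫ y in {y : Fin n → ℚ_[p] | ‖y‖ = ‖x‖}, (1 + ‖x - y‖ ^ lam) * ‖y‖ ^ (-α) ∂μ) ≤
          A * (‖x‖ ^ (-(α - n)) + ‖x‖ ^ (-(α - n - lam))) ∧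
      (∫ y in {y : Fin n → ℚ_[p] | ‖y‖ = ‖x‖}, (1 + ‖x - y‖ ^ lam) * ‖y‖ ^ (-α) ∂μ) ≤ A' := by
  have hp : Fact p.Prime := inferInstance
  have hp1 : (1:ℝ) < p := Nat.one_lt_cast.mpr hp.out.one_lt
  have hp0 : (0:ℝ) < p := by positivity
  set K : ℝ := max 1 ((p:ℝ) ^ (-l * (n:ℤ))) with hK
  have hK0 : 0 < K := lt_of_lt_of_le one_pos (le_max_left _ _)
  have hK1 : (1:ℝ) ≤ K := le_max_left _ _
  have hαn : 0 < α - n := lt_of_le_of_lt hlam0 hlam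
  have hpll : (0:ℝ) < (p:ℝ) ^ l := by positivity
  refine ⟨K, hK0,
    K * (((p:ℝ)^l) ^ (-(α - n)) + ((p:ℝ)^l) ^ (-(α - n - lam))), by positivity,
    fun L x hx hl => ?_⟩
  have hr0 : 0 < ‖x‖ := by rw [hx]; positivity
  set s : Set (Fin n → ℚ_[p]) := {y | ‖y‖ = ‖x‖} with hs
  have hsm : MeasurableSet s := (isClosed_eq continuous_norm continuous_const).measurableSet
  have hsub : s ⊆ Metric.closedBall 0 ‖x‖ := by
    intro y hy
    rw [Metric.mem_closedBall, dist_zero_right]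
    exact le_of_eq hy
  have hball : μ (Metric.closedBall (0 : Fin n → ℚ_[p]) ‖x‖) ≤
      ENNReal.ofReal (K * ‖x‖^n) := by
    rcases le_or_gt L 0 with hL | hL
    · set k : ℕ := (-L).toNat with hk
      have hkL : ((k:ℤ)) = -L := Int.toNat_of_nonneg (by omega)
      have hrk : ‖x‖ = (p:ℝ) ^ ((k:ℤ)) := by rw [hx, hkL]
      rw [hrk]
      refine le_trans (ballMeas μ hμ k) ?_
      rw [ENNReal.le_ofReal_iff_toReal_le
        (by simp [ENNReal.pow_ne_top, ENNReal.natCast_ne_top]) (by positivity)]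
      have ht : ((((p:ENNReal))^n)^k).toReal = ((p:ℝ)^n)^k := by simp
      rw [ht]
      have h1 : ((p:ℝ)^n)^k = ((p:ℝ)^((k:ℤ)))^n := by rw [zpow_natCast]; ring
      rw [h1]
      exact le_mul_of_one_le_left (by positivity) hK1
    · have hr1 : ‖x‖ ≤ 1 := by
        rw [hx]
        exact zpow_le_one_of_nonpos₀ hp1.le (by omega)
      refine le_trans (measure_mono (Metric.closedBall_subset_closedBall hr1)) ?_
      rw [hμ, ENNReal.le_ofReal_iff_toReal_le (by finiteness) (by positivity)]
      simp only [ENNReal.toReal_one]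
      have h2 : (p:ℝ) ^ (l * (n:ℤ)) ≤ ‖x‖^n := by
        rw [zpow_mul, zpow_natCast]
        exact pow_le_pow_left₀ hpll.le hl n
      have h3 : (p:ℝ) ^ (-l * (n:ℤ)) ≤ K := le_max_right _ _
      have h4 : (p:ℝ) ^ (-l * (n:ℤ)) * (p:ℝ) ^ (l * (n:ℤ)) = 1 := by
        rw [← zpow_add₀ (ne_of_gt hp0), show (-l*(n:ℤ) + l*(n:ℤ)) = 0 by ring, zpow_zero]
      nlinarith [zpow_pos hp0 (-l * (n:ℤ)), zpow_pos hp0 (l * (n:ℤ)), pow_pos hr0 n]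
  have hfin : μ s < ⊤ := lt_of_le_of_lt (measure_mono hsub)
    (lt_of_le_of_lt hball ENNReal.ofReal_lt_top)
  have hMs : (μ s).toReal ≤ K * ‖x‖^n := by
    refine le_trans (ENNReal.toReal_mono (by finiteness) (le_trans (measure_mono hsub) hball)) ?_
    rw [ENNReal.toReal_ofReal (by positivity)]
  set C : ℝ := (1 + ‖x‖ ^ lam) * ‖x‖ ^ (-α) with hC
  have hCpt : ∀ y ∈ s, ‖(1 + ‖x - y‖ ^ lam) * ‖y‖ ^ (-α)‖ ≤ C := by
    intro y hy
    have hyx : ‖y‖ = ‖x‖ := hy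
    have hxy : ‖x - y‖ ≤ ‖x‖ := by
      rw [pi_norm_le_iff_of_nonneg hr0.le]
      intro i
      have : (x - y) i = x i + (-(y i)) := by simp [sub_eq_add_neg]
      rw [this]
      refine le_trans (Padic.nonarchimedean _ _) (max_le ?_ ?_)
      · exact norm_le_pi_norm x i
      · rw [norm_neg, ← hyx]; exact norm_le_pi_norm y i
    have h1 : ‖x - y‖ ^ lam ≤ ‖x‖ ^ lam := Real.rpow_le_rpow (norm_nonneg _) hxy hlam0
    have h2 : (0:ℝ) ≤ (1 + ‖x - y‖ ^ lam) * ‖y‖ ^ (-α) := by positivity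
    rw [Real.norm_of_nonneg h2, hyx, hC]
    have h3 : (0:ℝ) ≤ ‖x‖ ^ (-α) := by positivity
    nlinarith
  have hint := norm_setIntegral_le_of_norm_le_const_ae' hfin
    (Filter.Eventually.of_forall hCpt)
  have hle : (∫ y in s, (1 + ‖x - y‖ ^ lam) * ‖y‖ ^ (-α) ∂μ) ≤ C * (μ s).toReal :=
    le_trans (le_abs_self _) hint
  have hrn : ‖x‖^n = ‖x‖ ^ ((n:ℝ)) := (Real.rpow_natCast ‖x‖ n).symm
  have e1 : ‖x‖ ^ (-α) * ‖x‖ ^ ((n:ℝ)) = ‖x‖ ^ (-(α - n)) := by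
    rw [← Real.rpow_add hr0]; congr 1; ring
  have e2 : ‖x‖ ^ lam * ‖x‖ ^ (-(α - n)) = ‖x‖ ^ (-(α - n - lam)) := by
    rw [← Real.rpow_add hr0]; congr 1; ring
  have key : C * (K * ‖x‖^n) = K * (‖x‖ ^ (-(α - n)) + ‖x‖ ^ (-(α - n - lam))) := by
    rw [hC, hrn, ← e2, ← e1]; ring
  have main : (∫ y in s, (1 + ‖x - y‖ ^ lam) * ‖y‖ ^ (-α) ∂μ) ≤
      K * (‖x‖ ^ (-(α - n)) + ‖x‖ ^ (-(α - n - lam))) := by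
    rw [← key]
    refine le_trans hle ?_
    have hCpos : 0 ≤ C := by rw [hC]; positivity
    exact mul_le_mul_of_nonneg_left hMs hCpos
  refine ⟨main, le_trans main ?_⟩
  have b1 : ‖x‖ ^ (-(α - n)) ≤ ((p:ℝ)^l) ^ (-(α - n)) :=
    Real.rpow_le_rpow_of_nonpos hpll hl (by linarith)
  have b2 : ‖x‖ ^ (-(α - n - lam)) ≤ ((p:ℝ)^l) ^ (-(α - n - lam)) :=
    Real.rpow_le_rpow_of_nonpos hpll hl (by linarith)
  nlinarith
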